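/- The score function of interval valued q-rung orthopair fuzzy numbers is monotone: for real numbers u⁻ ≤ u⁺ and v⁻ ≤ v⁺ in [0,1] and u'⁻ ≤ u'⁺ and v'⁻ ≤ v'⁺ in [0,1] with u⁻ ≤ u'⁻, u⁺ ≤ u'⁺, v⁻ ≥ v'⁻, and v⁺ ≥ v'⁺, the score S(a) = ½(u⁻ − v⁺(1−u⁺) + u⁺ − v⁻(1−u⁻)) satisfies S(u⁻,u⁺,v⁻,v⁺) ≤ S(u'⁻,u'⁺,v'⁻,v'⁺). -/
import Mathlib

/-- Score function of an interval valued q-rung orthopair fuzzy number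
`a = ⟨[u⁻,u⁺],[v⁻,v⁺]⟩`. -/
noncomputable def ivqScore (um up vm vp : ℝ) : ℝ :=
  (1 / 2) * (um - vp * (1 - up) + up - vm * (1 - um))

theorem ivqScore_monotone (um up vm vp um' up' vm' vp' : ℝ)
    (hum : 0 ≤ um) (huu : um ≤ up) (hup : up ≤ 1)
    (hvm : 0 ≤ vm) (hvv : vm ≤ vp) (hvp : vp ≤ 1)
    (hum' : 0 ≤ um') (huu' : um' ≤ up') (hup' : up' ≤ 1)
    (hvm' : 0 ≤ vm') (hvv' : vm' ≤ vp') (hvp' : vp' ≤ 1)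
    (h1 : um ≤ um') (h2 : up ≤ up') (h3 : vm' ≤ vm) (h4 : vp' ≤ vp) :
    ivqScore um up vm vp ≤ ivqScore um' up' vm' vp' := by
  unfold ivqScore
  nlinarith [mul_le_mul h4 (by linarith : 1 - up' ≤ 1 - up) (by linarith) (by linarith : (0:ℝ) ≤ vp),
    mul_le_mul h3 (by linarith : 1 - um' ≤ 1 - um) (by linarith) (by linarith : (0:ℝ) ≤ vm)]
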